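/- Let n = s·p^k, where s > 1 is squarefree, p is a prime not dividing s, and k ≥ 1. Then the Erdős-Burgess constant of the multiplicative semigroup of ℤ/nℤ satisfies I_r(ℤ/nℤ) ≤ D((ℤ/nℤ)^×) + (k - 1) + (φ(s) - 1). -/

import Mathlib

/-- The Davenport constant of a (multiplicative) commutative group: the least `k > 0` such
that every sequence of `k` elements has a nonempty subsequence with product `1`. -/
noncomputable def Davenport (G : Type*) [CommGroup G] : ℕ :=
  sInf {k : ℕ | 0 < k ∧ ∀ f : Fin k → G,
    ∃ T : Finset (Fin k), T.Nonempty ∧ ∏ i ∈ T, f i = 1}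

/-- The Erdős–Burgess constant of a commutative monoid: the least `t > 0` such that every
sequence of `t` elements has a nonempty subsequence whose product is idempotent. -/
noncomputable def ErdosBurgess (M : Type*) [CommMonoid M] : ℕ :=
  sInf {t : ℕ | 0 < t ∧ ∀ f : Fin t → M,
    ∃ T : Finset (Fin t), T.Nonempty ∧ (∏ i ∈ T, f i) * (∏ i ∈ T, f i) = ∏ i ∈ T, f i}


private lemma exists_prod_one {G : Type*} [CommGroup G] [Fintype G] {m : ℕ}
    (hm : Fintype.card G ≤ m) (f : Fin m → G) :
    ∃ T : Finset (Fin m), T.Nonempty ∧ ∏ i ∈ T, f i = 1 := by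
  classical
  set P : ℕ → G := fun j =>
    ∏ i ∈ Finset.univ.filter (fun i : Fin m => (i : ℕ) < j), f i with hP
  have key : ∀ a b : ℕ, a < b → b ≤ m → P a = P b →
      ∃ T : Finset (Fin m), T.Nonempty ∧ ∏ i ∈ T, f i = 1 := by
    intro a b hab hbm heq
    set T : Finset (Fin m) :=
      Finset.univ.filter (fun i : Fin m => a ≤ (i : ℕ) ∧ (i : ℕ) < b) with hT
    have hsplit : Finset.univ.filter (fun i : Fin m => (i : ℕ) < b)
        = (Finset.univ.filter (fun i : Fin m => (i : ℕ) < a)) ∪ T := by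
      ext i
      simp only [hT, Finset.mem_filter, Finset.mem_union, Finset.mem_univ, true_and]
      omega
    have hdisj : Disjoint (Finset.univ.filter (fun i : Fin m => (i : ℕ) < a)) T := by
      rw [Finset.disjoint_left]
      intro i hi hi'
      simp only [hT, Finset.mem_filter, Finset.mem_univ, true_and] at hi hi'
      omega
    have hprod : P b = P a * ∏ i ∈ T, f i := by
      rw [hP]
      simp only
      rw [hsplit, Finset.prod_union hdisj]
    refine ⟨T, ⟨⟨a, lt_of_lt_of_le hab hbm⟩, ?_⟩, ?_⟩
    · simp only [hT, Finset.mem_filter, Finset.mem_univ, true_and]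
      exact ⟨le_refl _, hab⟩
    · rw [heq] at hprod
      exact left_eq_mul.mp hprod
  obtain ⟨j₁, j₂, hne, heq⟩ := Fintype.exists_ne_map_eq_of_card_lt
    (fun j : Fin (m + 1) => P (j : ℕ)) (by simpa using Nat.lt_succ_of_le hm)
  rcases lt_trichotomy (j₁ : ℕ) (j₂ : ℕ) with h12 | h12 | h12
  · exact key _ _ h12 (by omega) heq
  · exact absurd (Fin.ext h12) hne
  · exact key _ _ h12 (by omega) heq.symm

private lemma zero_sum_in_subset {ι : Type*} [DecidableEq ι] {G : Type*} [CommGroup G] {N : ℕ}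
    (hprop : ∀ h : Fin N → G, ∃ T : Finset (Fin N), T.Nonempty ∧ ∏ i ∈ T, h i = 1)
    (S : Finset ι) (hS : N ≤ S.card) (u : ι → G) :
    ∃ W : Finset ι, W ⊆ S ∧ W.Nonempty ∧ ∏ i ∈ W, u i = 1 := by
  classical
  obtain ⟨S', hS'sub, hS'card⟩ := Finset.exists_subset_card_eq hS
  set e := Finset.equivFinOfCardEq hS'card with he
  obtain ⟨T, hTne, hTprod⟩ := hprop (fun j => u ((e.symm j : { x // x ∈ S' }) : ι))
  refine ⟨T.image (fun j => ((e.symm j : { x // x ∈ S' }) : ι)), ?_, hTne.image _, ?_⟩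
  · intro x hx
    obtain ⟨j, _, rfl⟩ := Finset.mem_image.mp hx
    exact hS'sub (e.symm j).2
  · rw [Finset.prod_image]
    · exact hTprod
    · intro j _ j' _ hjj
      exact e.symm.injective (Subtype.coe_injective hjj)

private lemma unitize_exists (s p k : ℕ) (hs : 1 < s) (hsq : Squarefree s) (hp : p.Prime)
    (hps : ¬ p ∣ s) (hk : 0 < k) (x : ℕ) :
    ∃ b : ℕ, Nat.Coprime b (s * p ^ k) ∧
      (∀ q ∈ s.primeFactors, ¬ q ∣ x → (b : ZMod q) = (x : ZMod q)) ∧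
      (¬ p ∣ x → (b : ZMod (p ^ k)) = (x : ZMod (p ^ k))) := by
  classical
  have hppos : 0 < p ^ k := pow_pos hp.pos k
  have hs0 : 0 < s := by omega
  set n := s * p ^ k with hn
  have hsdvdn : s ∣ n := dvd_mul_right s _
  have hpkdvdn : p ^ k ∣ n := dvd_mul_left _ s
  set Fx := ∏ q ∈ s.primeFactors.filter (· ∣ x), q with hFx
  have hFxdvd : Fx ∣ s := by
    calc Fx ∣ ∏ q ∈ s.primeFactors, q :=
          Finset.prod_dvd_prod_of_subset _ _ _ (Finset.filter_subset _ _)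
    _ = s := Nat.prod_primeFactors_of_squarefree hsq
  set Gx := if p ∣ x then p ^ k else 1 with hGx
  have hGxdvd : Gx ∣ p ^ k := by
    rw [hGx]; split_ifs; exacts [dvd_rfl, one_dvd _]
  obtain ⟨M, hM⟩ : Fx * Gx ∣ n := mul_dvd_mul hFxdvd hGxdvd
  have hFprime : ∀ r : ℕ, r.Prime → r ∣ Fx → r ∣ x ∧ r ∣ s := by
    intro r hr hrF
    obtain ⟨q, hq, hrq⟩ := hr.prime.exists_mem_finset_dvd hrF
    have hq' := Finset.mem_filter.mp hq
    have hqprime := Nat.prime_of_mem_primeFactors hq'.1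
    have hrqe : r = q := (Nat.prime_dvd_prime_iff_eq hr hqprime).mp hrq
    subst hrqe
    exact ⟨hq'.2, Nat.dvd_of_mem_primeFactors hq'.1⟩
  have hpM : ¬ p ∣ x → p ^ k ∣ M := by
    intro hpx
    have hpF : ¬ p ∣ Fx := fun h => hpx (hFprime p hp h).1
    have hGx1 : Gx = 1 := by rw [hGx, if_neg hpx]
    have hcopF : Nat.Coprime (p ^ k) Fx :=
      Nat.Coprime.pow_left k ((Nat.Prime.coprime_iff_not_dvd hp).mpr hpF)
    have hdvd : p ^ k ∣ Fx * M := by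
      have := hpkdvdn
      rw [hM, hGx1, mul_one] at this
      exact this
    exact hcopF.dvd_of_dvd_mul_left hdvd
  have hqM : ∀ q ∈ s.primeFactors, ¬ q ∣ x → q ∣ M := by
    intro q hq hqx
    have hqprime := Nat.prime_of_mem_primeFactors hq
    have hqbad : ¬ q ∣ Fx * Gx := by
      intro hqd
      rcases (Nat.Prime.dvd_mul hqprime).mp hqd with h | h
      · exact hqx (hFprime q hqprime h).1
      · rw [hGx] at h
        split_ifs at h with hpx
        · have : q = p := (Nat.prime_dvd_prime_iff_eq hqprime hp).mp (hqprime.dvd_of_dvd_pow h)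
          exact hps (this ▸ Nat.dvd_of_mem_primeFactors hq)
        · exact hqprime.one_lt.ne' (Nat.dvd_one.mp h)
    have hqn : q ∣ n := (Nat.dvd_of_mem_primeFactors hq).trans hsdvdn
    rw [hM] at hqn
    exact ((Nat.Prime.dvd_mul hqprime).mp hqn).resolve_left hqbad
  refine ⟨x + M, ?_, ?_, ?_⟩
  · -- coprimality
    rw [Nat.coprime_iff_gcd_eq_one]
    by_contra hg
    obtain ⟨r, hr, hrb, hrn⟩ : ∃ r : ℕ, r.Prime ∧ r ∣ x + M ∧ r ∣ n :=
      ⟨(Nat.gcd (x + M) n).minFac, Nat.minFac_prime hg,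
        (Nat.minFac_dvd _).trans (Nat.gcd_dvd_left _ _),
        (Nat.minFac_dvd _).trans (Nat.gcd_dvd_right _ _)⟩
    have hrsp : r ∣ s ∨ r = p := by
      rcases (Nat.Prime.dvd_mul hr).mp (hn ▸ hrn) with h | h
      · exact Or.inl h
      · exact Or.inr ((Nat.prime_dvd_prime_iff_eq hr hp).mp (hr.dvd_of_dvd_pow h))
    rcases hrsp with hrs | hrp
    · by_cases hrx : r ∣ x
      · have hrmem : r ∈ s.primeFactors := Nat.mem_primeFactors.mpr ⟨hr, hrs, hs0.ne'⟩
        have hrF : r ∣ Fx :=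
          Finset.dvd_prod_of_mem _ (Finset.mem_filter.mpr ⟨hrmem, hrx⟩)
        have hrM : r ∣ M := by
          have := Nat.dvd_sub hrb hrx
          simpa using this
        have hr2 : r * r ∣ n := by
          rw [hM]
          exact mul_dvd_mul (hrF.trans (dvd_mul_right Fx Gx)) hrM
        have hrnep : r ≠ p := fun h => hps (h ▸ hrs)
        have hcoprp : Nat.Coprime (r * r) (p ^ k) := by
          have h1 : Nat.Coprime r (p ^ k) :=
            Nat.Coprime.pow_right k ((Nat.coprime_primes hr hp).mpr hrnep)
          exact Nat.Coprime.mul h1 h1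
        have hr2s : r * r ∣ s := hcoprp.dvd_of_dvd_mul_right (hn ▸ hr2)
        have := hsq r hr2s
        exact hr.one_lt.ne' (Nat.isUnit_iff.mp this)
      · have hrM : r ∣ M := hqM r (Nat.mem_primeFactors.mpr ⟨hr, hrs, hs0.ne'⟩) hrx
        have : r ∣ x := by
          have := Nat.dvd_sub hrb hrM
          simpa using this
        exact hrx this
    · rw [hrp] at hrb
      by_cases hpx : p ∣ x
      · have hpnM : ¬ p ∣ M := by
          intro hpMd
          have hGxpk : Gx = p ^ k := by rw [hGx, if_pos hpx]
          have h1 : p ^ k * p ∣ n := by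
            rw [hM, hGxpk]
            calc p ^ k * p ∣ (Fx * p ^ k) * M :=
              mul_dvd_mul (dvd_mul_left _ _) hpMd
            _ = Fx * p ^ k * M := rfl
          have h2 : p ^ k * p ∣ p ^ k * s := by
            rw [hn, mul_comm s (p ^ k)] at h1
            exact h1
          exact hps ((Nat.mul_dvd_mul_iff_left hppos).mp h2)
        have : p ∣ M := by
          have := Nat.dvd_sub hrb hpx
          simpa using this
        exact hpnM this
      · have hpkM := hpM hpx
        have hpMd : p ∣ M := (dvd_pow_self p hk.ne').trans hpkM
        have : p ∣ x := by
          have := Nat.dvd_sub hrb hpMd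
          simpa using this
        exact hpx this
  · intro q hq hqx
    haveI : NeZero q := ⟨(Nat.prime_of_mem_primeFactors hq).pos.ne'⟩
    have h0 : (M : ZMod q) = 0 := (ZMod.natCast_eq_zero_iff _ _).mpr (hqM q hq hqx)
    push_cast
    rw [h0, add_zero]
  · intro hpx
    haveI : NeZero (p ^ k) := ⟨hppos.ne'⟩
    have h0 : (M : ZMod (p ^ k)) = 0 := (ZMod.natCast_eq_zero_iff _ _).mpr (hpM hpx)
    push_cast
    rw [h0, add_zero]

theorem stmt8 (s p k : ℕ) (hs : 1 < s) (hsq : Squarefree s) (hp : p.Prime)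
    (hps : ¬ p ∣ s) (hk : 0 < k) :
    ErdosBurgess (ZMod (s * p ^ k)) ≤
      Davenport ((ZMod (s * p ^ k))ˣ) + (k - 1) + (Nat.totient s - 1) := by
  classical
  have hppos : 0 < p ^ k := pow_pos hp.pos k
  have hs0 : 0 < s := by omega
  have hnpos : 0 < s * p ^ k := Nat.mul_pos hs0 hppos
  haveI hnz : NeZero (s * p ^ k) := ⟨hnpos.ne'⟩
  haveI hsz : NeZero s := ⟨hs0.ne'⟩
  haveI hpkz : NeZero (p ^ k) := ⟨hppos.ne'⟩
  set n := s * p ^ k with hn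
  have hsdvdn : s ∣ n := dvd_mul_right s _
  have hpkdvdn : p ^ k ∣ n := dvd_mul_left _ s
  have hcop_sp : Nat.Coprime s (p ^ k) :=
    Nat.Coprime.pow_right k (((Nat.Prime.coprime_iff_not_dvd hp).mpr hps).symm)
  set E := Nat.totient s with hE
  have hEcard : Fintype.card (ZMod s)ˣ = E := ZMod.card_units_eq_totient s
  have hE1 : 0 < E := hEcard ▸ Fintype.card_pos
  set D := Davenport (ZMod n)ˣ with hD
  have hDmem : 0 < D ∧ ∀ f : Fin D → (ZMod n)ˣ,
      ∃ T : Finset (Fin D), T.Nonempty ∧ ∏ i ∈ T, f i = 1 := by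
    have h1 : {t : ℕ | 0 < t ∧ ∀ f : Fin t → (ZMod n)ˣ,
        ∃ T : Finset (Fin t), T.Nonempty ∧ ∏ i ∈ T, f i = 1}.Nonempty :=
      ⟨Fintype.card (ZMod n)ˣ, Fintype.card_pos, fun h => exists_prod_one le_rfl h⟩
    have h2 := Nat.sInf_mem h1
    rw [hD]
    unfold Davenport
    exact h2
  obtain ⟨hD1, hDprop⟩ := hDmem
  have hmain : ∀ f : Fin (D + (k - 1) + (E - 1)) → ZMod n,
      ∃ T : Finset (Fin (D + (k - 1) + (E - 1))), T.Nonempty ∧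
        (∏ i ∈ T, f i) * (∏ i ∈ T, f i) = ∏ i ∈ T, f i := by
    set t := D + (k - 1) + (E - 1) with ht
    intro f
    set g : Fin t → ℕ := fun i => (f i).val with hg
    choose B hBcop hBq hBp using unitize_exists s p k hs hsq hp hps hk
    set w : Fin t → ℕ := fun i => if g i = 0 then k else min k ((g i).factorization p) with hw
    have hw2 : ∀ i, p ^ w i ∣ g i := by
      intro i
      by_cases hgi : g i = 0
      · rw [hgi]; exact dvd_zero _
      · have hwi : w i = min k ((g i).factorization p) := by rw [hw]; simp [hgi]
        rw [hwi]
        exact (pow_dvd_pow p (min_le_right _ _)).trans (Nat.ordProj_dvd _ _)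
    have hwpos : ∀ i, p ∣ g i → 1 ≤ w i := by
      intro i hpi
      by_cases hgi : g i = 0
      · have hwi : w i = k := by rw [hw]; simp [hgi]
        omega
      · have hwi : w i = min k ((g i).factorization p) := by rw [hw]; simp [hgi]
        rw [hwi]
        exact le_min hk (hp.factorization_pos_of_dvd hgi hpi)
    have close : ∀ T : Finset (Fin t), T.Nonempty →
        (((∏ i ∈ T, g i : ℕ) : ZMod (p ^ k)) = 0 ∨ ((∏ i ∈ T, g i : ℕ) : ZMod (p ^ k)) = 1) →
        (∀ q ∈ s.primeFactors,
          ((∏ i ∈ T, g i : ℕ) : ZMod q) = 0 ∨ ((∏ i ∈ T, g i : ℕ) : ZMod q) = 1) →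
        ∃ T' : Finset (Fin t), T'.Nonempty ∧
          (∏ i ∈ T', f i) * (∏ i ∈ T', f i) = ∏ i ∈ T', f i := by
      intro T hT Hpk Hq
      refine ⟨T, hT, ?_⟩
      set N := ∏ i ∈ T, g i with hN
      have hfN : ∏ i ∈ T, f i = (N : ZMod n) := by
        rw [hN, Nat.cast_prod]
        exact Finset.prod_congr rfl (fun i _ => (ZMod.natCast_rightInverse (f i)).symm)
      have hNle : N ≤ N * N := by
        rcases Nat.eq_zero_or_pos N with h | h
        · simp [h]
        · exact Nat.le_mul_of_pos_left N h
      have hmod : ∀ m : ℕ, 0 < m →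
          ((N : ZMod m) = 0 ∨ (N : ZMod m) = 1) → m ∣ N * N - N := by
        intro m hm hNm
        haveI : NeZero m := ⟨hm.ne'⟩
        rw [← ZMod.natCast_eq_zero_iff (N * N - N) m]
        rw [Nat.cast_sub hNle, Nat.cast_mul]
        rcases hNm with h | h <;> rw [h] <;> ring
      have hsdvd : s ∣ N * N - N := by
        rw [← Nat.prod_primeFactors_of_squarefree hsq]
        exact Finset.prod_primes_dvd _
          (fun q hq => (Nat.prime_of_mem_primeFactors hq).prime)
          (fun q hq => hmod q (Nat.prime_of_mem_primeFactors hq).pos (Hq q hq))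
      have hpkdvd : p ^ k ∣ N * N - N := hmod _ hppos Hpk
      have hndvd : n ∣ N * N - N := hcop_sp.mul_dvd_of_dvd_of_dvd hsdvd hpkdvd
      have hzero : ((N * N - N : ℕ) : ZMod n) = 0 :=
        (ZMod.natCast_eq_zero_iff _ _).mpr hndvd
      rw [Nat.cast_sub hNle, Nat.cast_mul] at hzero
      rw [hfN]
      exact sub_eq_zero.mp hzero
    by_cases hcase : (k - 1) + (E - 1) + 1 ≤ (Finset.univ.filter (fun i : Fin t => p ∣ g i)).card
    · -- Case 1 : many p-divisible elements
      set Pset := Finset.univ.filter (fun i : Fin t => p ∣ g i) with hPset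
      set us : Fin t → (ZMod s)ˣ := fun i =>
        ZMod.unitOfCoprime (B (g i)) ((hBcop (g i)).coprime_dvd_right hsdvdn) with hus
      have hpig : ∀ h : Fin E → (ZMod s)ˣ,
          ∃ T : Finset (Fin E), T.Nonempty ∧ ∏ i ∈ T, h i = 1 :=
        fun h => exists_prod_one (le_of_eq hEcard) h
      set FF := Pset.powerset.filter (fun W => W.Nonempty ∧ ∏ i ∈ W, us i = 1) with hFF
      have hFFne : FF.Nonempty := by
        obtain ⟨W, hWsub, hWne, hWprod⟩ := zero_sum_in_subset hpig Pset (by omega) us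
        exact ⟨W, Finset.mem_filter.mpr ⟨Finset.mem_powerset.mpr hWsub, hWne, hWprod⟩⟩
      obtain ⟨Wm, hWmem, hWmax⟩ := Finset.exists_max_image FF (fun W => ∑ i ∈ W, w i) hFFne
      rw [hFF, Finset.mem_filter, Finset.mem_powerset] at hWmem
      obtain ⟨hWsub, hWne, hWprod⟩ := hWmem
      have hWP : ∀ i ∈ Wm, p ∣ g i := fun i hi => (Finset.mem_filter.mp (hWsub hi)).2
      have hksum : k ≤ ∑ i ∈ Wm, w i := by
        by_contra hlt
        push_neg at hlt
        have hcard : Wm.card ≤ ∑ i ∈ Wm, w i := by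
          rw [Finset.card_eq_sum_ones]
          exact Finset.sum_le_sum (fun i hi => hwpos i (hWP i hi))
        have hrem : E ≤ (Pset \ Wm).card := by
          rw [Finset.card_sdiff_of_subset hWsub]
          omega
        obtain ⟨W', hW'sub, hW'ne, hW'prod⟩ := zero_sum_in_subset hpig (Pset \ Wm) hrem us
        have hdisj : Disjoint Wm W' := Finset.disjoint_left.mpr
          (fun a ha ha' => (Finset.mem_sdiff.mp (hW'sub ha')).2 ha)
        have hW'P : W' ⊆ Pset := hW'sub.trans Finset.sdiff_subset
        have hmem2 : Wm ∪ W' ∈ FF := by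
          rw [hFF, Finset.mem_filter, Finset.mem_powerset]
          refine ⟨Finset.union_subset hWsub hW'P, ?_, ?_⟩
          · exact Finset.Nonempty.mono Finset.subset_union_left hWne
          · rw [Finset.prod_union hdisj, hWprod, hW'prod, mul_one]
        have hle := hWmax _ hmem2
        rw [Finset.sum_union hdisj] at hle
        have hW'pos : 1 ≤ ∑ i ∈ W', w i := by
          have h1 : 1 ≤ W'.card := Finset.card_pos.mpr hW'ne
          have h2 : W'.card ≤ ∑ i ∈ W', w i := by
            rw [Finset.card_eq_sum_ones]
            exact Finset.sum_le_sum
              (fun i hi => hwpos i ((Finset.mem_filter.mp (hW'P hi)).2))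
          omega
        omega
      have hpk0 : ((∏ i ∈ Wm, g i : ℕ) : ZMod (p ^ k)) = 0 := by
        have h2 : ∏ i ∈ Wm, p ^ w i ∣ ∏ i ∈ Wm, g i :=
          Finset.prod_dvd_prod_of_dvd _ _ (fun i _ => hw2 i)
        rw [Finset.prod_pow_eq_pow_sum] at h2
        exact (ZMod.natCast_eq_zero_iff _ _).mpr
          ((pow_dvd_pow p hksum).trans h2)
      have hqd : ∀ q ∈ s.primeFactors,
          ((∏ i ∈ Wm, g i : ℕ) : ZMod q) = 0 ∨ ((∏ i ∈ Wm, g i : ℕ) : ZMod q) = 1 := by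
        intro q hq'
        have hqp := Nat.prime_of_mem_primeFactors hq'
        haveI : NeZero q := ⟨hqp.pos.ne'⟩
        by_cases hex : ∃ i ∈ Wm, q ∣ g i
        · left
          obtain ⟨i, hi, hqi⟩ := hex
          rw [Nat.cast_prod]
          exact Finset.prod_eq_zero hi ((ZMod.natCast_eq_zero_iff _ _).mpr hqi)
        · right
          push_neg at hex
          have hBprod : ((∏ i ∈ Wm, B (g i) : ℕ) : ZMod s) = 1 := by
            have hcoe := congrArg (Units.coeHom (ZMod s)) hWprod
            rw [map_prod] at hcoe
            rw [Nat.cast_prod]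
            simpa [hus, ZMod.coe_unitOfCoprime] using hcoe
          have hq_s : ((∏ i ∈ Wm, B (g i) : ℕ) : ZMod q) = 1 := by
            have hqs : q ∣ s := Nat.dvd_of_mem_primeFactors hq'
            have := congrArg (ZMod.castHom hqs (ZMod q)) hBprod
            rwa [map_one, map_natCast] at this
          rw [Nat.cast_prod]
          calc ∏ i ∈ Wm, ((g i : ℕ) : ZMod q)
              = ∏ i ∈ Wm, ((B (g i) : ℕ) : ZMod q) :=
                Finset.prod_congr rfl (fun i hi => (hBq (g i) q hq' (hex i hi)).symm)
          _ = 1 := by rw [← Nat.cast_prod]; exact hq_s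
      exact close Wm hWne (Or.inl hpk0) hqd
    · -- Case 2
      push_neg at hcase
      set Pset := Finset.univ.filter (fun i : Fin t => p ∣ g i) with hPset
      set Rset := Finset.univ.filter (fun i : Fin t => ¬ p ∣ g i) with hRset
      have hcards : Pset.card + Rset.card = t := by
        rw [hPset, hRset, Finset.card_filter_add_card_filter_not]
        simp
      have hRcard : D ≤ Rset.card := by omega
      set u : Fin t → (ZMod n)ˣ := fun i => ZMod.unitOfCoprime (B (g i)) (hBcop (g i)) with hu
      obtain ⟨W, hWsub, hWne, hWprod⟩ := zero_sum_in_subset hDprop Rset hRcard u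
      have hWR : ∀ i ∈ W, ¬ p ∣ g i := fun i hi => (Finset.mem_filter.mp (hWsub hi)).2
      have hBprodn : ((∏ i ∈ W, B (g i) : ℕ) : ZMod n) = 1 := by
        have hcoe := congrArg (Units.coeHom (ZMod n)) hWprod
        rw [map_prod] at hcoe
        rw [Nat.cast_prod]
        simpa [hu, ZMod.coe_unitOfCoprime] using hcoe
      have hpk1 : ((∏ i ∈ W, g i : ℕ) : ZMod (p ^ k)) = 1 := by
        have h1 : ((∏ i ∈ W, B (g i) : ℕ) : ZMod (p ^ k)) = 1 := by
          have := congrArg (ZMod.castHom hpkdvdn (ZMod (p ^ k))) hBprodn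
          rwa [map_one, map_natCast] at this
        rw [Nat.cast_prod]
        calc ∏ i ∈ W, ((g i : ℕ) : ZMod (p ^ k))
            = ∏ i ∈ W, ((B (g i) : ℕ) : ZMod (p ^ k)) :=
              Finset.prod_congr rfl (fun i hi => (hBp (g i) (hWR i hi)).symm)
        _ = 1 := by rw [← Nat.cast_prod]; exact h1
      have hqd : ∀ q ∈ s.primeFactors,
          ((∏ i ∈ W, g i : ℕ) : ZMod q) = 0 ∨ ((∏ i ∈ W, g i : ℕ) : ZMod q) = 1 := by
        intro q hq'
        have hqp := Nat.prime_of_mem_primeFactors hq'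
        haveI : NeZero q := ⟨hqp.pos.ne'⟩
        by_cases hex : ∃ i ∈ W, q ∣ g i
        · left
          obtain ⟨i, hi, hqi⟩ := hex
          rw [Nat.cast_prod]
          exact Finset.prod_eq_zero hi ((ZMod.natCast_eq_zero_iff _ _).mpr hqi)
        · right
          push_neg at hex
          have hq_s : ((∏ i ∈ W, B (g i) : ℕ) : ZMod q) = 1 := by
            have hqn : q ∣ n := (Nat.dvd_of_mem_primeFactors hq').trans hsdvdn
            have := congrArg (ZMod.castHom hqn (ZMod q)) hBprodn
            rwa [map_one, map_natCast] at this
          rw [Nat.cast_prod]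
          calc ∏ i ∈ W, ((g i : ℕ) : ZMod q)
              = ∏ i ∈ W, ((B (g i) : ℕ) : ZMod q) :=
                Finset.prod_congr rfl (fun i hi => (hBq (g i) q hq' (hex i hi)).symm)
          _ = 1 := by rw [← Nat.cast_prod]; exact hq_s
      exact close W hWne (Or.inr hpk1) hqd
  show ErdosBurgess (ZMod n) ≤ D + (k - 1) + (E - 1)
  unfold ErdosBurgess
  exact Nat.sInf_le ⟨by omega, hmain⟩
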